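/- arXiv:0705.3014 — 5 statements merged into one kernel-verified Lean document; each statement's English description precedes it below -/
import Mathlib

section
/- Let (r_n), (u_n), (v_n) be sequences of positive reals (n ≥ 0) such that r_n(v_{n+1}u_n - u_{n+1}v_n) = 1 for all n, and u_n = v_n · ∑_{k=n}^∞ 1/(r_k v_k v_{k+1}) for all n (the tail series being finite). Then the series ∑_{n=0}^∞ 1/(r_n u_n v_{n+1}) diverges. -/
open Filter

/-- Lemma 2.1, first part: under the standard relations between the
principal and non-principal solutions, ∑ 1/(r_n u_n v_{n+1}) diverges. -/
theorem stmt_3 (r u v : ℕ → ℝ)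
    (hr : ∀ n, 0 < r n) (hu : ∀ n, 0 < u n) (hv : ∀ n, 0 < v n)
    (hw : ∀ n, r n * (v (n + 1) * u n - u (n + 1) * v n) = 1)
    (hS : Summable (fun k : ℕ => 1 / (r k * v k * v (k + 1))))
    (huv : ∀ n, u n = v n * ∑' k : ℕ, 1 / (r (n + k) * v (n + k) * v (n + k + 1))) :
    ¬ Summable (fun n : ℕ => 1 / (r n * u n * v (n + 1))) := by
  set a : ℕ → ℝ := fun k => 1 / (r k * v k * v (k + 1)) with ha_def
  set f : ℕ → ℝ := fun n => 1 / (r n * u n * v (n + 1)) with hf_def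
  have ha_pos : ∀ k, 0 < a k := fun k => by
    have := hr k; have := hv k; have := hv (k + 1); positivity
  have hsum_tail : ∀ n, Summable (fun k => a (n + k)) := by
    intro n
    have := (summable_nat_add_iff (f := a) n).mpr hS
    simpa [add_comm] using this
  set R : ℕ → ℝ := fun n => ∑' k, a (n + k) with hR_def
  have hR_pos : ∀ n, 0 < R n := fun n =>
    Summable.tsum_pos (hsum_tail n) (fun k => (ha_pos _).le) 0 (ha_pos _)
  have hR_step : ∀ n, R n = a n + R (n + 1) := by
    intro n
    have h := Summable.tsum_eq_zero_add (f := fun k => a (n + k)) (hsum_tail n)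
    have h2 : (fun k => a (n + (k + 1))) = fun k => a ((n + 1) + k) := by
      funext k; congr 1; omega
    simpa [h2] using h
  have hR_mono : ∀ n k, R (n + k) ≤ R n := by
    intro n k
    induction k with
    | zero => simp
    | succ k ih =>
      calc R (n + (k + 1)) = R ((n + k) + 1) := by ring_nf
        _ ≤ R (n + k) := by
            have := hR_step (n + k); have := ha_pos (n + k); linarith
        _ ≤ R n := ih
  have hf_eq : ∀ n, f n = a n / R n := by
    intro n
    have hun : u n = v n * R n := by
      rw [huv n]
    have hx : r n * u n * v (n + 1) = (r n * v n * v (n + 1)) * R n := by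
      rw [hun]; ring
    rw [hf_def]
    simp only [hx, ha_def, ← div_div]
  intro hsum
  have hT_tail : ∀ n, Summable (fun k => f (n + k)) := by
    intro n
    have := (summable_nat_add_iff (f := f) n).mpr hsum
    simpa [add_comm] using this
  have hT_ge : ∀ n, (1 : ℝ) ≤ ∑' k, f (n + k) := by
    intro n
    have hle : ∀ k, a (n + k) / R n ≤ f (n + k) := by
      intro k
      rw [hf_eq (n + k)]
      exact div_le_div_of_nonneg_left (ha_pos _).le (hR_pos _) (hR_mono n k)
    have hsum_div : Summable (fun k => a (n + k) / R n) :=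
      (hsum_tail n).div_const _
    have := Summable.tsum_le_tsum hle hsum_div (hT_tail n)
    have htsum_div : ∑' k, a (n + k) / R n = R n / R n := by
      rw [tsum_div_const]
    rw [htsum_div, div_self (hR_pos n).ne'] at this
    exact this
  have htend : Tendsto (fun n => ∑' k, f (n + k)) atTop (nhds 0) := by
    have := tendsto_sum_nat_add f
    simpa [add_comm] using this
  have : (1 : ℝ) ≤ 0 := ge_of_tendsto htend (Eventually.of_forall hT_ge)
  linarith
end

section
/- Let (r_n), (u_n), (v_n) be positive sequences with r_n(v_{n+1}u_n - u_{n+1}v_n) = 1 and u_n = v_n ∑_{k=n}^∞ 1/(r_k v_k v_{k+1}), and suppose additionally v_{n+1} ≥ v_n for all n ≥ 0. Then ∑_{n=0}^∞ 1/(r_n u_n v_n) = ∞. -/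
open Filter

/-- Lemma 2.1, second part: if additionally v is nondecreasing, then
∑ 1/(r_n u_n v_n) diverges. -/
theorem stmt_4 (r u v : ℕ → ℝ)
    (hr : ∀ n, 0 < r n) (hu : ∀ n, 0 < u n) (hv : ∀ n, 0 < v n)
    (hw : ∀ n, r n * (v (n + 1) * u n - u (n + 1) * v n) = 1)
    (hS : Summable (fun k : ℕ => 1 / (r k * v k * v (k + 1))))
    (huv : ∀ n, u n = v n * ∑' k : ℕ, 1 / (r (n + k) * v (n + k) * v (n + k + 1)))
    (hmono : ∀ n, v n ≤ v (n + 1)) :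
    ¬ Summable (fun n : ℕ => 1 / (r n * u n * v n)) := by
  intro hsum
  set f : ℕ → ℝ := fun k => 1 / (r k * v k * v (k + 1)) with hfdef
  set t : ℕ → ℝ := fun n => ∑' k : ℕ, f (n + k) with htdef
  have hfpos : ∀ k, 0 < f k := fun k =>
    div_pos one_pos (mul_pos (mul_pos (hr k) (hv k)) (hv (k + 1)))
  have hts : ∀ n, Summable (fun k => f (n + k)) := by
    intro n
    have := (summable_nat_add_iff n).2 hS
    simpa [add_comm] using this
  have htpos : ∀ n, 0 < t n := fun n =>
    Summable.tsum_pos (hts n) (fun i => (hfpos _).le) 0 (hfpos _)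
  have hut : ∀ n, u n = v n * t n := fun n => huv n
  have hstep : ∀ n, t n = f n + t (n + 1) := by
    intro n
    have h := Summable.tsum_eq_zero_add (hts n)
    have he : (fun k => f (n + (k + 1))) = fun k => f ((n + 1) + k) := by
      funext k; congr 1; omega
    simpa [he] using h
  have hanti : Antitone t := by
    apply antitone_nat_of_succ_le
    intro n
    have := hstep n
    nlinarith [hfpos n]
  -- g n = f n / t n = 1 / (r n u n v (n+1))
  set g : ℕ → ℝ := fun n => f n / t n with hgdef
  have hgpos : ∀ n, 0 < g n := fun n => div_pos (hfpos n) (htpos n)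
  have hgle : ∀ n, g n ≤ 1 / (r n * u n * v n) := by
    intro n
    have h1 : g n = 1 / (r n * u n * v (n + 1)) := by
      have : r n * u n * v (n + 1) = (r n * v n * v (n + 1)) * t n := by
        rw [hut n]; ring
      rw [this, hgdef]
      simp only [hfdef]
      rw [div_div]
    rw [h1]
    apply one_div_le_one_div_of_le (mul_pos (mul_pos (hr n) (hu n)) (hv n))
    calc r n * u n * v n ≤ r n * u n * v (n + 1) :=
          mul_le_mul_of_nonneg_left (hmono n) (mul_pos (hr n) (hu n)).le
      _ = r n * u n * v (n + 1) := rfl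
  have hgsum : Summable g :=
    hsum.of_nonneg_of_le (fun n => (hgpos n).le) hgle
  -- tails of g tend to 0
  have htail : Tendsto (fun i => ∑' k, g (k + i)) atTop (nhds 0) :=
    tendsto_sum_nat_add g
  obtain ⟨N, hN⟩ : ∃ N, ∑' k, g (k + N) < 1 / 2 := by
    have := htail.eventually (gt_mem_nhds (by norm_num : (0:ℝ) < 1 / 2))
    rcases this.exists with ⟨N, hN⟩
    exact ⟨N, hN⟩
  -- t tends to 0
  have ht0 : Tendsto t atTop (nhds 0) := by
    have h := tendsto_sum_nat_add f
    have he : (fun i => ∑' k, f (k + i)) = t := by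
      funext i
      exact tsum_congr fun k => by rw [add_comm]
    rwa [he] at h
  obtain ⟨M, hM⟩ : ∃ M, t (N + M) < t N / 2 := by
    have := (ht0.comp (tendsto_add_atTop_nat N)).eventually
      (gt_mem_nhds (half_pos (htpos N)))
    rcases this.exists with ⟨M, hM⟩
    exact ⟨M, by simpa [Nat.add_comm] using hM⟩
  -- partial sums of the tail of g
  have hsum_le : ∑ k ∈ Finset.range M, g (N + k) ≤ ∑' k, g (k + N) := by
    have hsg : Summable (fun k => g (k + N)) := (summable_nat_add_iff N).2 hgsum
    have : ∑ k ∈ Finset.range M, g (N + k) = ∑ k ∈ Finset.range M, g (k + N) := by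
      apply Finset.sum_congr rfl; intro k _; rw [add_comm]
    rw [this]
    exact Summable.sum_le_tsum _ (fun i _ => (hgpos _).le) hsg
  have hlow : (t N - t (N + M)) / t N ≤ ∑ k ∈ Finset.range M, g (N + k) := by
    have htele : ∑ k ∈ Finset.range M, f (N + k) = t N - t (N + M) := by
      have : ∀ k, f (N + k) = t (N + k) - t (N + k + 1) := by
        intro k; have := hstep (N + k); linarith
      calc ∑ k ∈ Finset.range M, f (N + k)
          = ∑ k ∈ Finset.range M, (t (N + k) - t (N + (k + 1))) := by
            apply Finset.sum_congr rfl; intro k _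
            rw [this k, show N + k + 1 = N + (k + 1) from rfl]
        _ = t N - t (N + M) :=
            Finset.sum_range_sub' (fun k => t (N + k)) M
    rw [← htele, Finset.sum_div]
    apply Finset.sum_le_sum
    intro k _
    have h1 : t (N + k) ≤ t N := hanti (Nat.le_add_right N k)
    have h2 : 0 < t (N + k) := htpos _
    show f (N + k) / t N ≤ f (N + k) / t (N + k)
    gcongr
    exact (hfpos (N + k)).le
  have hfinal : (1:ℝ) / 2 < (t N - t (N + M)) / t N := by
    rw [lt_div_iff₀ (htpos N)]
    linarith
  linarith
end

section
/- Let (r_n), (u_n), (v_n) be positive real sequences satisfying r_n(v_{n+1}u_n - u_{n+1}v_n) = 1 for all n ≥ 0, with ∑_{k}^∞ 1/(r_k u_k u_{k+1}) divergent, and let (σ_n) be a complex sequence such that the series J = ∑_{n=0}^∞ σ_n u_n v_n converges (possibly conditionally). Set J_m = ∑_{k=m}^∞ σ_k u_k v_k and A_n = sup_{m≥n} |J_m|. Assume also u_n/v_n = ∑_{k=n}^∞ 1/(r_k v_k v_{k+1}) for all n. Then for each n the series R_n = ∑_{k=n}^∞ σ_k u_k^2 converges, and the quantity C_n = (v_n/u_n)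 R_n satisfies |C_n| ≤ 2 A_n. -/
open Filter

/-- Abel summation core: if F k = (T k - T (k+1)) * w k with T → 0, w the tail sums of
a nonnegative summable g, and |T m| ≤ A for all m, then ∑ F converges with sum of
absolute value at most 2 A w 0. -/
lemma abel_aux (T : ℕ → ℂ) (w g : ℕ → ℝ) (F : ℕ → ℂ) (A : ℝ)
    (hg0 : ∀ k, 0 ≤ g k)
    (hstep : ∀ k, w k - w (k + 1) = g k)
    (hwt : ∀ m, w m = ∑' k, g (m + k))
    (hgsum : ∀ m, Summable fun k => g (m + k))
    (hT0 : Filter.Tendsto T atTop (nhds 0))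
    (hF : ∀ k, F k = (T k - T (k + 1)) * (w k : ℂ))
    (hA : ∀ m, ‖T m‖ ≤ A) :
    ∃ R : ℂ, Filter.Tendsto (fun N => ∑ k ∈ Finset.range N, F k) atTop (nhds R) ∧
      ‖R‖ ≤ 2 * A * w 0 := by
  -- w tends to 0
  have hw0 : Tendsto w atTop (nhds 0) := by
    have h := tendsto_sum_nat_add g
    refine h.congr fun i => ?_
    rw [hwt i]
    exact tsum_congr fun k => by rw [Nat.add_comm]
  -- summability of the correction series
  have hnorm : ∀ k, ‖T (k + 1) * (g k : ℂ)‖ ≤ A * g k := by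
    intro k
    rw [norm_mul, Complex.norm_real, Real.norm_of_nonneg (hg0 k)]
    exact mul_le_mul_of_nonneg_right (hA (k + 1)) (hg0 k)
  have hgsum0 : Summable g := by simpa using hgsum 0
  have hsn : Summable fun k => ‖T (k + 1) * (g k : ℂ)‖ :=
    Summable.of_nonneg_of_le (fun k => norm_nonneg _) hnorm (hgsum0.mul_left A)
  have hsum2 : Summable fun k => T (k + 1) * (g k : ℂ) := Summable.of_norm hsn
  refine ⟨T 0 * (w 0 : ℂ) - ∑' k, T (k + 1) * (g k : ℂ), ?_, ?_⟩
  · -- partial sum identity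
    have key : ∀ N, ∑ k ∈ Finset.range N, F k
        = (T 0 * (w 0 : ℂ) - T N * (w N : ℂ)) - ∑ k ∈ Finset.range N, T (k + 1) * (g k : ℂ) := by
      intro N
      have h1 : ∀ k, F k = (T k * (w k : ℂ) - T (k + 1) * (w (k + 1) : ℂ))
          - T (k + 1) * (g k : ℂ) := by
        intro k
        have hc : ((g k : ℝ) : ℂ) = (w k : ℂ) - (w (k + 1) : ℂ) := by
          rw [← Complex.ofReal_sub, hstep k]
        rw [hF k, hc]; ring
      rw [Finset.sum_congr rfl fun k _ => h1 k, Finset.sum_sub_distrib,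
        Finset.sum_range_sub' (fun k => T k * (w k : ℂ))]
    have t1 : Tendsto (fun N => T N * (w N : ℂ)) atTop (nhds 0) := by
      have hwc : Tendsto (fun N => ((w N : ℝ) : ℂ)) atTop (nhds 0) := by
        have := (Complex.continuous_ofReal.tendsto 0).comp hw0
        simpa [Function.comp_def] using this
      simpa using hT0.mul hwc
    have t2 : Tendsto (fun N => ∑ k ∈ Finset.range N, T (k + 1) * (g k : ℂ)) atTop
        (nhds (∑' k, T (k + 1) * (g k : ℂ))) := hsum2.hasSum.tendsto_sum_nat
    have := ((tendsto_const_nhds (x := T 0 * (w 0 : ℂ))).sub t1).sub t2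
    simp only [sub_zero] at this
    exact Tendsto.congr (fun N => (key N).symm) this
  · -- the bound
    have hbound : ‖∑' k, T (k + 1) * (g k : ℂ)‖ ≤ A * w 0 := by
      calc ‖∑' k, T (k + 1) * (g k : ℂ)‖
          ≤ ∑' k, ‖T (k + 1) * (g k : ℂ)‖ := norm_tsum_le_tsum_norm hsn
        _ ≤ ∑' k, A * g k := Summable.tsum_le_tsum hnorm hsn (hgsum0.mul_left A)
        _ = A * ∑' k, g k := tsum_mul_left
        _ = A * w 0 := by rw [hwt 0]; simp
    calc ‖T 0 * (w 0 : ℂ) - ∑' k, T (k + 1) * (g k : ℂ)‖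
        ≤ ‖T 0 * (w 0 : ℂ)‖ + ‖∑' k, T (k + 1) * (g k : ℂ)‖ := norm_sub_le _ _
      _ ≤ A * w 0 + A * w 0 := by
          refine add_le_add ?_ hbound
          rw [norm_mul, Complex.norm_real]
          have hw00 : 0 ≤ w 0 := by
            rw [hwt 0]; exact tsum_nonneg fun k => hg0 _
          rw [Real.norm_of_nonneg hw00]
          exact mul_le_mul_of_nonneg_right (hA 0) hw00
      _ = 2 * A * w 0 := by ring

lemma ciSup_prop_pos {p : Prop} (hp : p) (c : ℝ) : (⨆ _ : p, c) = c :=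
  ciSup_pos hp

lemma ciSup_prop_neg {p : Prop} (hp : ¬p) (c : ℝ) : (⨆ _ : p, c) = 0 := by
  haveI : IsEmpty p := ⟨hp⟩
  exact Real.iSup_of_isEmpty _

/-- Assertion 1: if J = ∑ σ_n u_n v_n converges (possibly conditionally),
then each tail R_n = ∑_{k=n}^∞ σ_k u_k² converges and C_n = (v_n/u_n) R_n satisfies
|C_n| ≤ 2 A_n, where A_n = sup_{m≥n} |J_m| and J_m = J - ∑_{k<m} σ_k u_k v_k. -/
theorem stmt_6 (r u v : ℕ → ℝ) (σ : ℕ → ℂ)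
    (hr : ∀ n, 0 < r n) (hu : ∀ n, 0 < u n) (hv : ∀ n, 0 < v n)
    (hw : ∀ n, r n * (v (n + 1) * u n - u (n + 1) * v n) = 1)
    (hdiv : ¬ Summable (fun k : ℕ => 1 / (r k * u k * u (k + 1))))
    (hS : Summable (fun k : ℕ => 1 / (r k * v k * v (k + 1))))
    (hratio : ∀ n, u n / v n = ∑' k : ℕ, 1 / (r (n + k) * v (n + k) * v (n + k + 1)))
    (J : ℂ)
    (hJ : Tendsto (fun N : ℕ => ∑ k ∈ Finset.range N, σ k * (u k : ℂ) * (v k : ℂ))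
      atTop (nhds J)) :
    ∀ n : ℕ, ∃ R : ℂ,
      Tendsto (fun N : ℕ => ∑ k ∈ Finset.range N, σ (n + k) * (u (n + k) : ℂ) ^ 2)
        atTop (nhds R) ∧
      ‖((v n / u n : ℝ) : ℂ) * R‖
        ≤ 2 * ⨆ m ≥ n, ‖
            (J - ∑ k ∈ Finset.range m, σ k * (u k : ℂ) * (v k : ℂ))‖ := by
  intro n
  -- abbreviations (as plain terms)
  have hT0 : Tendsto (fun m => J - ∑ k ∈ Finset.range m, σ k * (u k : ℂ) * (v k : ℂ))
      atTop (nhds 0) := by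
    have := hJ.const_sub J
    simpa using this
  -- bound on the whole sequence of tails
  obtain ⟨C, hC⟩ : ∃ C, ∀ m,
      ‖J - ∑ k ∈ Finset.range m, σ k * (u k : ℂ) * (v k : ℂ)‖ ≤ C := by
    have hb : BddAbove (Set.range fun m =>
        ‖J - ∑ k ∈ Finset.range m, σ k * (u k : ℂ) * (v k : ℂ)‖) := by
      have : Tendsto (fun m =>
          ‖J - ∑ k ∈ Finset.range m, σ k * (u k : ℂ) * (v k : ℂ)‖)
          atTop (nhds ‖(0 : ℂ)‖) := (continuous_norm.tendsto 0).comp hT0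
      exact this.bddAbove_range
    obtain ⟨C, hC⟩ := hb
    exact ⟨C, fun m => hC (Set.mem_range_self m)⟩
  set A : ℝ := ⨆ m, ⨆ _ : m ≥ n, ‖
      (J - ∑ k ∈ Finset.range m, σ k * (u k : ℂ) * (v k : ℂ))‖ with hAdef
  have hbddA : BddAbove (Set.range fun m => ⨆ _ : m ≥ n, ‖
      (J - ∑ k ∈ Finset.range m, σ k * (u k : ℂ) * (v k : ℂ))‖) := by
    refine ⟨C ⊔ 0, ?_⟩
    rintro x ⟨m, rfl⟩
    dsimp only
    by_cases h : m ≥ n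
    · rw [ciSup_prop_pos h]
      exact le_sup_of_le_left (hC m)
    · rw [ciSup_prop_neg h]
      exact le_sup_right
  have hA : ∀ m, n ≤ m → ‖
      (J - ∑ k ∈ Finset.range m, σ k * (u k : ℂ) * (v k : ℂ))‖ ≤ A := by
    intro m hm
    calc ‖J - ∑ k ∈ Finset.range m, σ k * (u k : ℂ) * (v k : ℂ)‖
        = ⨆ _ : m ≥ n, ‖
          (J - ∑ k ∈ Finset.range m, σ k * (u k : ℂ) * (v k : ℂ))‖ := (ciSup_prop_pos hm _).symm
      _ ≤ A := le_ciSup hbddA m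
  -- shifted data
  have hgsum : ∀ m : ℕ, Summable fun k =>
      1 / (r (m + k) * v (m + k) * v (m + k + 1)) := by
    intro m
    have : Summable fun k : ℕ =>
        1 / (r (k + m) * v (k + m) * v (k + m + 1)) := (summable_nat_add_iff m).2 hS
    exact this.congr fun k => by rw [Nat.add_comm]
  have hstep : ∀ m : ℕ, u m / v m - u (m + 1) / v (m + 1)
      = 1 / (r m * v m * v (m + 1)) := by
    intro m
    rw [hratio m, hratio (m + 1), Summable.tsum_eq_zero_add (hgsum m)]
    have hre : (fun k : ℕ => 1 / (r (m + (k + 1)) * v (m + (k + 1)) * v (m + (k + 1) + 1)))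
        = fun k : ℕ => 1 / (r (m + 1 + k) * v (m + 1 + k) * v (m + 1 + k + 1)) := by
      funext k
      rw [show m + (k + 1) = m + 1 + k by omega]
    rw [hre]
    simp
  obtain ⟨R, hR1, hR2⟩ := abel_aux
    (fun m => J - ∑ k ∈ Finset.range (n + m), σ k * (u k : ℂ) * (v k : ℂ))
    (fun m => u (n + m) / v (n + m))
    (fun m => 1 / (r (n + m) * v (n + m) * v (n + m + 1)))
    (fun k => σ (n + k) * (u (n + k) : ℂ) ^ 2)
    A
    (fun k => by
      have h1 := hr (n + k)
      have h2 := hv (n + k)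
      have h3 := hv (n + k + 1)
      positivity)
    (fun k => by
      have := hstep (n + k)
      simpa [Nat.add_assoc] using this)
    (fun m => by
      have := hratio (n + m)
      rw [this]
      exact tsum_congr fun k => by rw [Nat.add_assoc])
    (fun m => by
      have := hgsum (n + m)
      exact this.congr fun k => by rw [Nat.add_assoc])
    (hT0.comp ((tendsto_add_atTop_nat n).congr fun a => Nat.add_comm a n))
    (fun k => by
      have hTd : (J - ∑ j ∈ Finset.range (n + k), σ j * (u j : ℂ) * (v j : ℂ))
          - (J - ∑ j ∈ Finset.range (n + (k + 1)), σ j * (u j : ℂ) * (v j : ℂ))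
          = σ (n + k) * (u (n + k) : ℂ) * (v (n + k) : ℂ) := by
        rw [show n + (k + 1) = (n + k) + 1 by omega, Finset.sum_range_succ]
        ring
      rw [hTd]
      have hvne : ((v (n + k) : ℝ) : ℂ) ≠ 0 := by
        exact_mod_cast (hv (n + k)).ne'
      rw [Complex.ofReal_div]
      field_simp)
    (fun m => by
      exact hA (n + m) (Nat.le_add_right n m))
  refine ⟨R, ?_, ?_⟩
  · exact hR1
  · have hwpos : 0 < u n / v n := div_pos (hu n) (hv n)
    have : ‖((v n / u n : ℝ) : ℂ) * R‖
        = (v n / u n) * ‖R‖ := by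
      rw [norm_mul, Complex.norm_real, Real.norm_of_nonneg (div_pos (hv n) (hu n)).le]
    rw [this]
    have h2 : ‖R‖ ≤ 2 * A * (u n / v n) := by
      simpa using hR2
    calc (v n / u n) * ‖R‖ ≤ (v n / u n) * (2 * A * (u n / v n)) := by
          exact mul_le_mul_of_nonneg_left h2 (div_pos (hv n) (hu n)).le
      _ = 2 * A := by
          have hun := (hu n).ne'
          have hvn := (hv n).ne'
          field_simp
end

section
/- In the setting of Assertion 1 (positive sequences r, u, v with r_n(v_{n+1}u_n - u_{n+1}v_n)=1, u_n/v_n = ∑_{k=n}^∞ 1/(r_k v_k v_{k+1}), complex σ with J = ∑ σ_n u_n v_n convergent, C_n = (v_n/u_n)∑_{k=n}^∞ σ_k u_k^2, J_n = ∑_{k=n}^∞ σ_k u_k v_k), the series H_n = ∑_{k=n}^∞ C_{k+1}/(r_k u_k v_{k+1}) converges for every n, and H_n = (v_n/u_n) ∑_{k=n}^∞ J_{k+1}/(r_k v_k v_{k+1}); equivalently, H_n = J_n - C_n. -/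
open Filter

private lemma aux_idA (a b a' b' ρ R' x : ℂ) (ha : a ≠ 0) (ha' : a' ≠ 0) (hρ : ρ ≠ 0)
    (hb' : b' ≠ 0) (hw : ρ * (b' * a - a' * b) = 1) :
    b' / a' * R' / (ρ * a * b') = (b' / a' * R' - b / a * (x * a ^ 2 + R')) + x * a * b := by
  field_simp
  linear_combination (-R') * hw

/-- Lemma 7.1a: in the setting of Assertion 1, the series
H_n = ∑_{k=n}^∞ C_{k+1}/(r_k u_k v_{k+1}) converges,
H_n = (v_n/u_n) ∑_{k=n}^∞ J_{k+1}/(r_k v_k v_{k+1}) (the latter summable), and H_n = J_n - C_n. -/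
theorem stmt_7 (r u v : ℕ → ℝ) (σ : ℕ → ℂ)
    (hr : ∀ n, 0 < r n) (hu : ∀ n, 0 < u n) (hv : ∀ n, 0 < v n)
    (hw : ∀ n, r n * (v (n + 1) * u n - u (n + 1) * v n) = 1)
    (hS : Summable (fun k : ℕ => 1 / (r k * v k * v (k + 1))))
    (hratio : ∀ n, u n / v n = ∑' k : ℕ, 1 / (r (n + k) * v (n + k) * v (n + k + 1)))
    (J : ℂ)
    (hJ : Tendsto (fun N : ℕ => ∑ k ∈ Finset.range N, σ k * (u k : ℂ) * (v k : ℂ))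
      atTop (nhds J))
    (R : ℕ → ℂ)
    (hR : ∀ n, Tendsto
      (fun N : ℕ => ∑ k ∈ Finset.range N, σ (n + k) * (u (n + k) : ℂ) ^ 2)
      atTop (nhds (R n)))
    (C : ℕ → ℂ) (hC : ∀ n, C n = ((v n / u n : ℝ) : ℂ) * R n)
    (Jt : ℕ → ℂ)
    (hJt : ∀ n, Jt n = J - ∑ k ∈ Finset.range n, σ k * (u k : ℂ) * (v k : ℂ)) :
    ∀ n : ℕ, ∃ H : ℂ,
      Tendsto (fun N : ℕ => ∑ k ∈ Finset.range N,
          C (n + k + 1) / ((r (n + k) * u (n + k) * v (n + k + 1) : ℝ) : ℂ))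
        atTop (nhds H) ∧
      Summable (fun k : ℕ =>
          Jt (n + k + 1) / ((r (n + k) * v (n + k) * v (n + k + 1) : ℝ) : ℂ)) ∧
      H = ((v n / u n : ℝ) : ℂ) *
          ∑' k : ℕ, Jt (n + k + 1) / ((r (n + k) * v (n + k) * v (n + k + 1) : ℝ) : ℂ) ∧
      H = Jt n - C n := by
  have hrne : ∀ n, r n ≠ 0 := fun n => (hr n).ne'
  have hune : ∀ n, u n ≠ 0 := fun n => (hu n).ne'
  have hvne : ∀ n, v n ≠ 0 := fun n => (hv n).ne'
  have hrC : ∀ n, ((r n : ℝ) : ℂ) ≠ 0 := fun n => Complex.ofReal_ne_zero.2 (hrne n)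
  have huC : ∀ n, ((u n : ℝ) : ℂ) ≠ 0 := fun n => Complex.ofReal_ne_zero.2 (hune n)
  have hvC : ∀ n, ((v n : ℝ) : ℂ) ≠ 0 := fun n => Complex.ofReal_ne_zero.2 (hvne n)
  set t : ℕ → ℝ := fun n => u n / v n with ht
  have htpos : ∀ n, 0 < t n := fun n => div_pos (hu n) (hv n)
  -- difference identity for t
  have hdiff : ∀ n, t n - t (n + 1) = 1 / (r n * v n * v (n + 1)) := by
    intro n
    have hrn := hrne n; have hvn := hvne n; have hvn1 := hvne (n + 1)
    have htn : t n = u n / v n := rfl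
    have htn1 : t (n + 1) = u (n + 1) / v (n + 1) := rfl
    rw [htn, htn1]
    field_simp
    linear_combination hw n
  -- t tends to 0
  have ht0 : Tendsto t atTop (nhds 0) := by
    have := tendsto_sum_nat_add (fun k : ℕ => 1 / (r k * v k * v (k + 1)))
    refine this.congr (fun n => ?_)
    have htn : t n = u n / v n := rfl
    rw [htn, hratio n]
    exact tsum_congr fun k => by rw [add_comm k n]
  -- d summable
  have hd_sum : Summable (fun k => t k - t (k + 1)) := by
    refine hS.congr fun k => (hdiff k).symm
  have hd_nonneg : ∀ k, 0 ≤ t k - t (k + 1) := by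
    intro k
    rw [hdiff k]
    have h1 := hr k; have h2 := hv k; have h3 := hv (k+1)
    positivity
  -- tail sums of d
  have hd_tail : ∀ m, Summable (fun k => t (m + k) - t (m + k + 1)) := by
    intro m
    have := (summable_nat_add_iff m).2 hd_sum
    exact this.congr fun k => by rw [add_comm k m]
  have htail : ∀ m, HasSum (fun k => t (m + k) - t (m + k + 1)) (t m) := by
    intro m
    refine (hd_tail m).hasSum_iff_tendsto_nat.2 ?_
    have hps : ∀ N, ∑ k ∈ Finset.range N, (t (m + k) - t (m + k + 1)) = t m - t (m + N) := by
      intro N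
      have := Finset.sum_range_sub' (fun i => t (m + i)) N
      simpa [add_assoc] using this
    simp only [hps]
    have : Tendsto (fun N : ℕ => t (m + N)) atTop (nhds 0) :=
      ht0.comp (tendsto_add_atTop_nat m |>.congr fun N => by rw [add_comm])
    simpa using tendsto_const_nhds.sub this
  -- Jt recurrence and limit
  have hJtrec : ∀ k, Jt k - Jt (k + 1) = σ k * (u k : ℂ) * (v k : ℂ) := by
    intro k
    rw [hJt, hJt, Finset.sum_range_succ]
    ring
  have hJt0 : Tendsto Jt atTop (nhds 0) := by
    have : Tendsto (fun n : ℕ => J - ∑ k ∈ Finset.range n, σ k * (u k : ℂ) * (v k : ℂ))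
        atTop (nhds (J - J)) := tendsto_const_nhds.sub hJ
    simpa [← hJt] using this
  -- R recurrence
  have hRrec : ∀ k, R k = σ k * (u k : ℂ) ^ 2 + R (k + 1) := by
    intro k
    have h1 : Tendsto (fun N : ℕ => ∑ j ∈ Finset.range (N + 1), σ (k + j) * (u (k + j) : ℂ) ^ 2)
        atTop (nhds (R k)) := (hR k).comp (tendsto_add_atTop_nat 1)
    have h2 : ∀ N : ℕ, ∑ j ∈ Finset.range (N + 1), σ (k + j) * (u (k + j) : ℂ) ^ 2
        = σ k * (u k : ℂ) ^ 2 + ∑ j ∈ Finset.range N, σ (k + 1 + j) * (u (k + 1 + j) : ℂ) ^ 2 := by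
      intro N
      rw [Finset.sum_range_succ']
      simp only [Nat.add_zero]
      rw [add_comm]
      congr 1
      refine Finset.sum_congr rfl fun j _ => ?_
      have : k + (j + 1) = k + 1 + j := by omega
      rw [this]
    rw [funext h2] at h1
    exact tendsto_nhds_unique h1 (tendsto_const_nhds.add (hR (k + 1)))
  -- g and its summability
  set g : ℕ → ℂ := fun k => Jt (k + 1) * ((t k - t (k + 1) : ℝ) : ℂ) with hg
  obtain ⟨M, hM⟩ : ∃ M, ∀ k, ‖Jt k‖ ≤ M := by
    have hb : BddAbove (Set.range fun k => ‖Jt k‖) := (hJt0.norm).bddAbove_range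
    obtain ⟨M, hM⟩ := hb
    exact ⟨M, fun k => hM ⟨k, rfl⟩⟩
  have hg_norm : ∀ k, ‖g k‖ = ‖Jt (k + 1)‖ * (t k - t (k + 1)) := by
    intro k
    rw [hg]
    simp only [norm_mul, Complex.norm_real, Real.norm_eq_abs, abs_of_nonneg (hd_nonneg k)]
  have hg_sum : Summable g := by
    refine Summable.of_norm ?_
    refine Summable.of_nonneg_of_le (fun k => norm_nonneg _) (fun k => ?_) (hd_sum.mul_left M)
    rw [hg_norm k]
    exact mul_le_mul_of_nonneg_right (hM _) (hd_nonneg k)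
  have hg_tail : ∀ n, Summable (fun k => g (n + k)) := by
    intro n
    have := (summable_nat_add_iff n).2 hg_sum
    exact this.congr fun k => by rw [add_comm k n]
  -- identity B
  have hIdB : ∀ k, g k = (Jt k * ((t k : ℝ) : ℂ) - Jt (k + 1) * ((t (k + 1) : ℝ) : ℂ))
      - σ k * (u k : ℂ) ^ 2 := by
    intro k
    have h := hJtrec k
    have htk : ((t k : ℝ) : ℂ) = (u k : ℂ) / (v k : ℂ) := by
      rw [ht]; push_cast; ring
    have key : (Jt k - Jt (k + 1)) * ((t k : ℝ) : ℂ) = σ k * (u k : ℂ) ^ 2 := by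
      rw [h, htk]
      have hvC' := hvC k
      field_simp
    rw [hg]
    push_cast
    linear_combination -key
  -- S and its value
  set S : ℕ → ℂ := fun n => ∑' k, g (n + k) with hgS
  have hS_eq : ∀ n, S n = Jt n * ((t n : ℝ) : ℂ) - R n := by
    intro n
    have hps : ∀ N, ∑ k ∈ Finset.range N, g (n + k)
        = (Jt n * ((t n : ℝ) : ℂ) - Jt (n + N) * ((t (n + N) : ℝ) : ℂ))
          - ∑ k ∈ Finset.range N, σ (n + k) * (u (n + k) : ℂ) ^ 2 := by
      intro N
      have : ∀ k, g (n + k) = ((fun i => Jt (n + i) * ((t (n + i) : ℝ) : ℂ)) k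
          - (fun i => Jt (n + i) * ((t (n + i) : ℝ) : ℂ)) (k + 1))
          - σ (n + k) * (u (n + k) : ℂ) ^ 2 := by
        intro k
        have := hIdB (n + k)
        simpa [show n + k + 1 = n + (k + 1) by omega] using this
      rw [funext this, Finset.sum_sub_distrib, Finset.sum_range_sub']
      simp
    have hlim : Tendsto (fun N => ∑ k ∈ Finset.range N, g (n + k)) atTop
        (nhds ((Jt n * ((t n : ℝ) : ℂ) - 0) - R n)) := by
      rw [funext hps]
      refine Tendsto.sub ?_ (hR n)
      refine tendsto_const_nhds.sub ?_
      have h1 : Tendsto (fun N : ℕ => Jt (n + N)) atTop (nhds 0) :=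
        hJt0.comp ((tendsto_add_atTop_nat n).congr fun N => by rw [add_comm])
      have h2 : Tendsto (fun N : ℕ => ((t (n + N) : ℝ) : ℂ)) atTop (nhds 0) := by
        have := ht0.comp ((tendsto_add_atTop_nat n).congr fun N : ℕ => by rw [add_comm])
        have := (Complex.continuous_ofReal.tendsto 0).comp this
        simpa [Function.comp_def] using this
      simpa using h1.mul h2
    have := (hg_tail n).hasSum.tendsto_sum_nat
    have heq := tendsto_nhds_unique this hlim
    rw [hgS]
    simpa using heq
  -- C in terms of S
  have hvu : ∀ m, (v m / u m) * t m = 1 := by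
    intro m
    have htm : t m = u m / v m := rfl
    rw [htm, div_mul_div_comm, mul_comm (v m) (u m)]
    exact div_self (mul_ne_zero (hune m) (hvne m))
  have hst : ∀ m, ((v m / u m : ℝ) : ℂ) * ((t m : ℝ) : ℂ) = 1 := by
    intro m
    rw [← Complex.ofReal_mul, hvu m, Complex.ofReal_one]
  have hC_eq : ∀ m, C m = Jt m - ((v m / u m : ℝ) : ℂ) * S m := by
    intro m
    rw [hC m, hS_eq m]
    have h1 := hst m
    linear_combination Jt m * h1
  -- C tends to 0
  have hC0 : Tendsto C atTop (nhds 0) := by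
    rw [NormedAddCommGroup.tendsto_nhds_zero]
    intro ε hε
    have h3 : (0 : ℝ) < ε / 3 := by linarith
    have hJtε := (NormedAddCommGroup.tendsto_nhds_zero.1 hJt0) (ε / 3) h3
    rw [eventually_atTop] at hJtε ⊢
    obtain ⟨m0, hm0⟩ := hJtε
    refine ⟨m0, fun m hm => ?_⟩
    have hSnorm : ‖S m‖ ≤ (ε / 3) * t m := by
      have h1 : ‖S m‖ ≤ ∑' k, ‖g (m + k)‖ := norm_tsum_le_tsum_norm ((hg_tail m).norm)
      have h2 : ∑' k, ‖g (m + k)‖ ≤ ∑' k, (ε / 3) * (t (m + k) - t (m + k + 1)) := by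
        refine Summable.tsum_le_tsum (fun k => ?_) ((hg_tail m).norm) ((hd_tail m).mul_left (ε / 3))
        rw [hg_norm (m + k)]
        have : m + k + 1 = m + (k + 1) := by omega
        refine mul_le_mul_of_nonneg_right ?_ (hd_nonneg (m + k))
        exact le_of_lt (hm0 (m + k + 1) (by omega))
      have h3' : ∑' k, (ε / 3) * (t (m + k) - t (m + k + 1)) = (ε / 3) * t m := by
        rw [tsum_mul_left, (htail m).tsum_eq]
      calc ‖S m‖ ≤ ∑' k, ‖g (m + k)‖ := h1
        _ ≤ ∑' k, (ε / 3) * (t (m + k) - t (m + k + 1)) := h2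
        _ = (ε / 3) * t m := h3'
    have hvum : ‖((v m / u m : ℝ) : ℂ)‖ = v m / u m := by
      rw [Complex.norm_real, Real.norm_eq_abs, abs_of_pos (div_pos (hv m) (hu m))]
    have hterm : ‖((v m / u m : ℝ) : ℂ) * S m‖ ≤ ε / 3 := by
      rw [norm_mul, hvum]
      have := mul_le_mul_of_nonneg_left hSnorm (le_of_lt (div_pos (hv m) (hu m)))
      have heq : v m / u m * ((ε / 3) * t m) = ε / 3 := by
        rw [mul_comm (ε / 3) (t m), ← mul_assoc, hvu m, one_mul]
      linarith [this, heq ▸ this]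
    have hCm : ‖C m‖ ≤ ‖Jt m‖ + ‖((v m / u m : ℝ) : ℂ) * S m‖ := by
      rw [hC_eq m]
      exact norm_sub_le _ _
    have := hm0 m hm
    calc ‖C m‖ ≤ ‖Jt m‖ + ‖((v m / u m : ℝ) : ℂ) * S m‖ := hCm
      _ ≤ ε / 3 + ε / 3 := by have := hm0 m hm; linarith [hterm]
      _ < ε := by linarith
  -- per-term identity A
  have hIdA : ∀ k, C (k + 1) / ((r k * u k * v (k + 1) : ℝ) : ℂ)
      = (C (k + 1) - C k) + σ k * (u k : ℂ) * (v k : ℂ) := by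
    intro k
    rw [hC (k + 1), hC k, hRrec k]
    have hwC : ((r k : ℝ) : ℂ) * (((v (k + 1) : ℝ) : ℂ) * ((u k : ℝ) : ℂ)
        - ((u (k + 1) : ℝ) : ℂ) * ((v k : ℝ) : ℂ)) = 1 := by
      have h0 : ((r k * (v (k + 1) * u k - u (k + 1) * v k) : ℝ) : ℂ) = ((1 : ℝ) : ℂ) :=
        congrArg (fun x : ℝ => (x : ℂ)) (hw k)
      push_cast at h0
      linear_combination h0
    push_cast
    exact aux_idA ((u k : ℝ) : ℂ) ((v k : ℝ) : ℂ) ((u (k + 1) : ℝ) : ℂ) ((v (k + 1) : ℝ) : ℂ)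
      ((r k : ℝ) : ℂ) (R (k + 1)) (σ k) (huC k) (huC (k + 1)) (hrC k) (hvC (k + 1)) hwC
  -- main construction
  intro n
  refine ⟨Jt n - C n, ?_, ?_, ?_, rfl⟩
  · -- tendsto of partial sums
    have hps : ∀ N, ∑ k ∈ Finset.range N,
        C (n + k + 1) / ((r (n + k) * u (n + k) * v (n + k + 1) : ℝ) : ℂ)
        = (C (n + N) - C n) + (∑ k ∈ Finset.range (n + N), σ k * (u k : ℂ) * (v k : ℂ)
          - ∑ k ∈ Finset.range n, σ k * (u k : ℂ) * (v k : ℂ)) := by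
      intro N
      have hsum1 : ∑ k ∈ Finset.range N, (C (n + k + 1) - C (n + k)) = C (n + N) - C n := by
        have := Finset.sum_range_sub (fun i => C (n + i)) N
        simpa [← add_assoc] using this
      have hsum2 : ∑ k ∈ Finset.range (n + N), σ k * (u k : ℂ) * (v k : ℂ)
          = ∑ k ∈ Finset.range n, σ k * (u k : ℂ) * (v k : ℂ)
            + ∑ k ∈ Finset.range N, σ (n + k) * (u (n + k) : ℂ) * (v (n + k) : ℂ) := by
        simpa using Finset.sum_range_add (fun k => σ k * (u k : ℂ) * (v k : ℂ)) n N
      calc ∑ k ∈ Finset.range N,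
            C (n + k + 1) / ((r (n + k) * u (n + k) * v (n + k + 1) : ℝ) : ℂ)
          = ∑ k ∈ Finset.range N, ((C (n + k + 1) - C (n + k))
              + σ (n + k) * (u (n + k) : ℂ) * (v (n + k) : ℂ)) :=
            Finset.sum_congr rfl fun k _ => hIdA (n + k)
        _ = _ := by rw [Finset.sum_add_distrib, hsum1, hsum2]; ring
    rw [funext hps]
    have h2 : Tendsto (fun N : ℕ => C (n + N)) atTop (nhds 0) :=
      hC0.comp ((tendsto_add_atTop_nat n).congr fun N => by rw [add_comm])
    have h3 : Tendsto (fun N : ℕ => ∑ k ∈ Finset.range (n + N), σ k * (u k : ℂ) * (v k : ℂ))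
        atTop (nhds J) := hJ.comp (tendsto_add_atTop_nat n |>.congr fun N => by rw [add_comm])
    have h4 := (h2.sub (tendsto_const_nhds (x := C n))).add
      (h3.sub (tendsto_const_nhds (x := ∑ k ∈ Finset.range n, σ k * (u k : ℂ) * (v k : ℂ))))
    have : (0 - C n) + (J - ∑ k ∈ Finset.range n, σ k * (u k : ℂ) * (v k : ℂ)) = Jt n - C n := by
      rw [hJt n]; ring
    rw [this] at h4
    exact h4
  · -- summability
    refine (hg_tail n).congr fun k => ?_
    simp only [hg]
    rw [hdiff (n + k)]
    push_cast
    ring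
  · -- value of H
    have htsum : (∑' k : ℕ, Jt (n + k + 1) / ((r (n + k) * v (n + k) * v (n + k + 1) : ℝ) : ℂ))
        = S n := by
      rw [hgS]
      refine tsum_congr fun k => ?_
      simp only [hg]
      rw [hdiff (n + k)]
      push_cast
      ring
    rw [htsum, hS_eq n, hC n]
    linear_combination (-(Jt n)) * hst n
end

section
/- Let α ∈ [0,1) and β > 0 with α + β > 1. Then the series ∑_{n=n_0}^∞ (-1)^n (n+1)^{-β} v_n converges, where v_n = ∑_{k=1}^{n-1} k^{-α} (and v_1 = 0), for suitable n_0. -/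
open Filter Finset Real

-- Bernoulli telescope bound: ∑_{k=1}^M k^{-α} ≤ M^{1-α}/(1-α)
lemma aux_vbound' (α : ℝ) (hα0 : 0 ≤ α) (hα1 : α < 1) (M : ℕ) :
    ∑ i ∈ range M, ((i : ℝ) + 1) ^ (-α) ≤ (M : ℝ) ^ (1 - α) / (1 - α) := by
  have hp : 0 < 1 - α := by linarith
  induction M with
  | zero => simp [Real.zero_rpow hp.ne']
  | succ M ih =>
      rw [Finset.sum_range_succ]
      have ha : (0:ℝ) < (M:ℝ) + 1 := by positivity
      have key : (1 - α) * ((M:ℝ)+1) ^ (-α) ≤ ((M:ℝ)+1) ^ (1-α) - (M:ℝ) ^ (1-α) := by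
        have hs : (-1:ℝ) ≤ -(1/((M:ℝ)+1)) := by
          rw [neg_le_neg_iff]
          rw [div_le_one ha]; linarith
        have hb := rpow_one_add_le_one_add_mul_self hs hp.le (by linarith : (1:ℝ) - α ≤ 1)
        -- (1 - 1/(M+1))^(1-α) ≤ 1 - (1-α)/(M+1)
        have h2 : ((M:ℝ)/((M:ℝ)+1)) ^ (1-α) ≤ 1 - (1-α) * (1/((M:ℝ)+1)) := by
          have : (1:ℝ) + -(1/((M:ℝ)+1)) = (M:ℝ)/((M:ℝ)+1) := by field_simp; ring
          rw [this] at hb; linarith [hb]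
        have h3 : (M:ℝ) ^ (1-α) ≤ (((M:ℝ)+1) ^ (1-α)) * (1 - (1-α) * (1/((M:ℝ)+1))) := by
          have hdiv : ((M:ℝ)/((M:ℝ)+1)) ^ (1-α) = (M:ℝ) ^ (1-α) / (((M:ℝ)+1) ^ (1-α)) :=
            Real.div_rpow (Nat.cast_nonneg M) ha.le _
          rw [hdiv, div_le_iff₀ (rpow_pos_of_pos ha _)] at h2
          linarith [h2]
        have h4 : ((M:ℝ)+1) ^ (-α) = ((M:ℝ)+1) ^ (1-α) / ((M:ℝ)+1) := by
          rw [show (-α) = (1-α) - 1 by ring, Real.rpow_sub ha, Real.rpow_one]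
        rw [h4]
        calc (1-α) * (((M:ℝ)+1) ^ (1-α) / ((M:ℝ)+1))
            = (((M:ℝ)+1) ^ (1-α)) * ((1-α) * (1/((M:ℝ)+1))) := by ring
          _ ≤ ((M:ℝ)+1) ^ (1-α) - (M:ℝ) ^ (1-α) := by nlinarith [h3]
      have hle : ((M:ℝ)+1) ^ (-α) ≤ (((M:ℝ)+1) ^ (1-α) - (M:ℝ) ^ (1-α)) / (1-α) := by
        rw [le_div_iff₀ hp]; linarith [key]
      push_cast
      calc (∑ i ∈ range M, ((i:ℝ)+1) ^ (-α)) + ((M:ℝ)+1) ^ (-α)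
          ≤ (M:ℝ) ^ (1-α) / (1-α) + (((M:ℝ)+1) ^ (1-α) - (M:ℝ) ^ (1-α)) / (1-α) :=
            add_le_add ih hle
        _ = ((M:ℝ)+1) ^ (1-α) / (1-α) := by ring

-- tail bound for alternating series
lemma aux_tail {g : ℕ → ℝ} (hg : Antitone g) {T : ℝ}
    (hT : Tendsto (fun N => ∑ i ∈ range N, (-1:ℝ) ^ i * g i) atTop (nhds T)) (m : ℕ) :
    |T - ∑ i ∈ range m, (-1:ℝ) ^ i * g i| ≤ g m := by
  have hstep : ∀ n, ∑ i ∈ range (n+1), (-1:ℝ) ^ i * g i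
      = (∑ i ∈ range n, (-1:ℝ) ^ i * g i) + (-1:ℝ)^n * g n := fun n => sum_range_succ _ n
  rcases Nat.even_or_odd m with ⟨k, hk⟩ | ⟨k, hk⟩
  · have hk' : m = 2 * k := by omega
    have hlo := hg.alternating_series_le_tendsto hT k
    have hhi := hg.tendsto_le_alternating_series hT k
    rw [← hk'] at hlo
    have : (2:ℕ) * k + 1 = m + 1 := by omega
    rw [this, hstep m] at hhi
    have hpow : (-1:ℝ)^m = 1 := by
      rw [hk']; simp [pow_mul]
    rw [hpow, one_mul] at hhi
    rw [abs_sub_le_iff]; constructor <;> [linarith; linarith [(hg m.le_succ : g (m+1) ≤ g m), (le_trans (by positivity : (0:ℝ) ≤ 0) (le_refl (0:ℝ)))]]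
  · have hk' : m = 2 * k + 1 := by omega
    have hhi := hg.tendsto_le_alternating_series hT k
    have hlo := hg.alternating_series_le_tendsto hT (k+1)
    rw [← hk'] at hhi
    have : (2:ℕ) * (k+1) = m + 1 := by omega
    rw [this, hstep m] at hlo
    have hpow : (-1:ℝ)^m = -1 := by
      rw [hk']; simp [pow_mul, pow_succ]
    rw [hpow] at hlo
    rw [abs_sub_le_iff]
    constructor <;> linarith

/-- step IV of Example 9.3: for α ∈ [0,1), β > 0, α + β > 1, the series
∑_{n=n₀}^∞ (-1)^n (n+1)^{-β} v_n converges, where v_n = ∑_{k=1}^{n-1} k^{-α}. -/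
theorem stmt_18 (α β : ℝ) (hα0 : 0 ≤ α) (hα1 : α < 1) (hβ : 0 < β) (h1 : 1 < α + β) :
    ∃ n₀ : ℕ, ∃ S : ℝ,
      Tendsto (fun N : ℕ => ∑ n ∈ Finset.Ico n₀ N,
          (-1 : ℝ) ^ n / ((n : ℝ) + 1) ^ β * ∑ k ∈ Finset.Icc 1 (n - 1), (k : ℝ) ^ (-α))
        atTop (nhds S) := by
  have hp : (0:ℝ) < 1 - α := by linarith
  -- the alternating coefficients
  set g : ℕ → ℝ := fun n => ((n:ℝ)+1) ^ (-β) with hgdef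
  have hgpos : ∀ n, 0 < g n := fun n => Real.rpow_pos_of_pos (by positivity) _
  have hganti : Antitone g := by
    intro m n h
    exact Real.rpow_le_rpow_of_nonpos (by positivity)
      (by have : (m:ℝ) ≤ n := Nat.cast_le.mpr h; linarith) (neg_nonpos.mpr hβ.le)
  have hg0 : Tendsto g atTop (nhds 0) := by
    have h2 : Tendsto (fun n : ℕ => (n:ℝ) + 1) atTop atTop :=
      tendsto_atTop_add_const_right _ 1 tendsto_natCast_atTop_atTop
    exact (tendsto_rpow_neg_atTop hβ).comp h2
  obtain ⟨T, hT⟩ := hganti.tendsto_alternating_series_of_tendsto_zero hg0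
  set Sser : ℕ → ℝ := fun N => ∑ i ∈ range N, (-1:ℝ) ^ i * g i with hSdef
  have htail : ∀ m, |T - Sser m| ≤ g m := fun m => aux_tail hganti hT m
  -- v
  set v : ℕ → ℝ := fun n => ∑ k ∈ Ico 1 n, (k:ℝ) ^ (-α) with hvdef
  have hIccIco : ∀ n : ℕ, Finset.Icc 1 (n-1) = Finset.Ico 1 n := by
    intro n
    cases n with
    | zero => simp
    | succ m => rw [Nat.succ_sub_one, Finset.Ico_add_one_right_eq_Icc]
  have hvnonneg : ∀ n, 0 ≤ v n := by
    intro n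
    apply Finset.sum_nonneg
    intro k _
    positivity
  have hvbound : ∀ n : ℕ, v n ≤ (n:ℝ) ^ (1-α) / (1-α) := by
    intro n
    have h2 : v n = ∑ i ∈ range (n-1), ((i:ℝ)+1) ^ (-α) := by
      rw [hvdef]
      simp only
      rw [Finset.sum_Ico_eq_sum_range]
      apply Finset.sum_congr rfl
      intro i _
      push_cast
      ring_nf
    rw [h2]
    calc ∑ i ∈ range (n-1), ((i:ℝ)+1) ^ (-α) ≤ ((n-1:ℕ):ℝ) ^ (1-α) / (1-α) :=
          aux_vbound' α hα0 hα1 (n-1)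
      _ ≤ (n:ℝ) ^ (1-α) / (1-α) := by
          exact (div_le_div_iff_of_pos_right hp).mpr (Real.rpow_le_rpow (Nat.cast_nonneg _)
            (by exact_mod_cast Nat.sub_le n 1) (by linarith))
  -- recurrences
  have hvstep : ∀ n : ℕ, 1 ≤ n → v (n+1) = v n + (n:ℝ) ^ (-α) := by
    intro n hn
    rw [hvdef]
    simp only
    exact Finset.sum_Ico_succ_top hn _
  have hSstep : ∀ n : ℕ, Sser (n+1) = Sser n + (-1:ℝ) ^ n * g n := by
    intro n
    rw [hSdef]
    simp only
    exact Finset.sum_range_succ _ n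
  -- Abel summation identity
  have key : ∀ N : ℕ, 1 ≤ N →
      ∑ n ∈ Ico 1 N, (-1:ℝ) ^ n * g n * v n
        = Sser N * v N - ∑ n ∈ Ico 1 N, Sser (n+1) * (n:ℝ) ^ (-α) := by
    intro N hN
    induction N, hN using Nat.le_induction with
    | base =>
        simp only [Finset.Ico_self, Finset.sum_empty]
        have hv1 : v 1 = 0 := by rw [hvdef]; simp
        rw [hv1]; ring
    | succ N hN ih =>
        rw [Finset.sum_Ico_succ_top hN, Finset.sum_Ico_succ_top hN, ih,
          hvstep N hN, hSstep N]
        ring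
  -- rewrite via tail terms
  have key2 : ∀ N : ℕ, 1 ≤ N →
      ∑ n ∈ Ico 1 N, (-1:ℝ) ^ n * g n * v n
        = (Sser N - T) * v N - ∑ n ∈ Ico 1 N, (Sser (n+1) - T) * (n:ℝ) ^ (-α) := by
    intro N hN
    rw [key N hN]
    have hsplit : ∑ n ∈ Ico 1 N, (Sser (n+1) - T) * (n:ℝ) ^ (-α)
        = (∑ n ∈ Ico 1 N, Sser (n+1) * (n:ℝ) ^ (-α)) - T * v N := by
      rw [hvdef]
      simp only
      rw [Finset.mul_sum, ← Finset.sum_sub_distrib]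
      apply Finset.sum_congr rfl
      intro n _
      ring
    rw [hsplit]
    ring
  -- first piece tends to 0
  have hA : Tendsto (fun N => (Sser N - T) * v N) atTop (nhds 0) := by
    refine squeeze_zero_norm' (a := fun N : ℕ => (N:ℝ) ^ (1-α-β) * (1-α)⁻¹) ?_ ?_
    · filter_upwards [eventually_ge_atTop 1] with N hN
      have hNpos : (0:ℝ) < N := by exact_mod_cast hN
      have h1' : ‖(Sser N - T) * v N‖ = |Sser N - T| * v N := by
        rw [norm_mul, Real.norm_eq_abs, Real.norm_eq_abs, abs_of_nonneg (hvnonneg N)]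
      rw [h1']
      have h2' : |Sser N - T| ≤ (N:ℝ) ^ (-β) := by
        rw [abs_sub_comm]
        refine (htail N).trans ?_
        exact Real.rpow_le_rpow_of_nonpos hNpos (by linarith) (neg_nonpos.mpr hβ.le)
      calc |Sser N - T| * v N ≤ (N:ℝ) ^ (-β) * ((N:ℝ) ^ (1-α) / (1-α)) := by
            apply mul_le_mul h2' (hvbound N) (hvnonneg N) (Real.rpow_nonneg hNpos.le _)
        _ = (N:ℝ) ^ (1-α-β) * (1-α)⁻¹ := by
            rw [div_eq_mul_inv, ← mul_assoc, ← Real.rpow_add hNpos]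
            ring_nf
    · have h3 : Tendsto (fun x : ℝ => x ^ (1-α-β)) atTop (nhds 0) := by
        have : 1-α-β = -(α+β-1) := by ring
        rw [this]
        exact tendsto_rpow_neg_atTop (by linarith)
      have h4 : Tendsto (fun N : ℕ => (N:ℝ) ^ (1-α-β)) atTop (nhds 0) :=
        h3.comp tendsto_natCast_atTop_atTop
      simpa using h4.mul_const (1-α)⁻¹
  -- second piece: summable tail series
  set h' : ℕ → ℝ := fun i => (Sser (i+2) - T) * ((i:ℝ)+1) ^ (-α) with hh'def
  have hsummaj : Summable (fun i : ℕ => ((i:ℝ)+1) ^ (-(α+β))) := by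
    have := (summable_nat_add_iff 1).mpr (Real.summable_nat_rpow.mpr
      (by linarith : -(α+β) < -1))
    refine this.congr fun i => ?_
    push_cast
    ring_nf
  have hsum : Summable h' := by
    apply Summable.of_norm_bounded hsummaj
    intro i
    have hipos : (0:ℝ) < (i:ℝ)+1 := by positivity
    rw [hh'def]
    simp only
    rw [norm_mul, Real.norm_eq_abs, Real.norm_eq_abs,
      abs_of_nonneg (Real.rpow_nonneg hipos.le _)]
    have h2' : |Sser (i+2) - T| ≤ ((i:ℝ)+1) ^ (-β) := by
      rw [abs_sub_comm]
      refine (htail (i+2)).trans ?_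
      refine Real.rpow_le_rpow_of_nonpos hipos ?_ (neg_nonpos.mpr hβ.le)
      push_cast
      linarith
    calc |Sser (i+2) - T| * ((i:ℝ)+1) ^ (-α)
        ≤ ((i:ℝ)+1) ^ (-β) * ((i:ℝ)+1) ^ (-α) := by
          apply mul_le_mul_of_nonneg_right h2' (Real.rpow_nonneg hipos.le _)
      _ = ((i:ℝ)+1) ^ (-(α+β)) := by
          rw [← Real.rpow_add hipos]
          ring_nf
  have hQ : Tendsto (fun N => ∑ i ∈ range N, h' i) atTop (nhds (∑' i, h' i)) :=
    hsum.hasSum.tendsto_sum_nat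
  -- rewrite the Ico sum as a range sum
  have hIcoRange : ∀ N : ℕ, ∑ n ∈ Ico 1 N, (Sser (n+1) - T) * (n:ℝ) ^ (-α)
      = ∑ i ∈ range (N-1), h' i := by
    intro N
    rw [Finset.sum_Ico_eq_sum_range]
    apply Finset.sum_congr rfl
    intro i _
    rw [hh'def]
    simp only
    have : 1 + i + 1 = i + 2 := by omega
    rw [this]
    congr 1
    push_cast
    ring_nf
  have hB : Tendsto (fun N : ℕ => ∑ n ∈ Ico 1 N, (Sser (n+1) - T) * (n:ℝ) ^ (-α))
      atTop (nhds (∑' i, h' i)) := by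
    have := hQ.comp (tendsto_sub_atTop_nat 1)
    refine this.congr fun N => ?_
    exact (hIcoRange N).symm
  -- combine
  refine ⟨1, 0 - ∑' i, h' i, ?_⟩
  have hmain : Tendsto (fun N : ℕ => ∑ n ∈ Ico 1 N, (-1:ℝ) ^ n * g n * v n)
      atTop (nhds (0 - ∑' i, h' i)) := by
    apply Tendsto.congr' ?_ (hA.sub hB)
    filter_upwards [eventually_ge_atTop 1] with N hN
    exact (key2 N hN).symm
  refine hmain.congr fun N => ?_
  apply Finset.sum_congr rfl
  intro n hn
  have hn1 : 1 ≤ n := (Finset.mem_Ico.mp hn).1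
  have hnpos : (0:ℝ) < (n:ℝ) + 1 := by positivity
  rw [hIccIco n]
  have : (-1:ℝ) ^ n / ((n:ℝ)+1) ^ β = (-1:ℝ) ^ n * g n := by
    rw [hgdef]
    simp only
    rw [Real.rpow_neg hnpos.le, div_eq_mul_inv]
  rw [this]
end
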